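/- Let {P_i}_{i=1}^N be the unique group of positive definite solutions to the HCREs. Then for any positive definite initial matrices P_{1,0}, …, P_{N,0}, the iterates of the iterative law converge entrywise to the solution, i.e. lim_{k→∞} P_{i,k} = P_i for every i ∈ {1, …, N}. -/

import Mathlib

open Matrix Filter

set_option linter.unusedSectionVars false
variable {ι : Type*} [Fintype ι] [DecidableEq ι]

namespace HCRE

/-- quadratic form -/
noncomputable def qf (M : Matrix ι ι ℝ) (x : ι → ℝ) : ℝ := x ⬝ᵥ M *ᵥ x

lemma psd_iff {M : Matrix ι ι ℝ} : M.PosSemidef ↔ M.IsHermitian ∧ ∀ x, 0 ≤ qf M x := by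
  unfold qf; rw [posSemidef_iff_dotProduct_mulVec]
  simp [star_trivial]

lemma qf_add (M N : Matrix ι ι ℝ) (x : ι → ℝ) : qf (M + N) x = qf M x + qf N x := by
  simp [qf, add_mulVec, dotProduct_add]

lemma qf_sub (M N : Matrix ι ι ℝ) (x : ι → ℝ) : qf (M - N) x = qf M x - qf N x := by
  simp [qf, sub_mulVec, dotProduct_sub]

lemma qf_smul (c : ℝ) (M : Matrix ι ι ℝ) (x : ι → ℝ) : qf (c • M) x = c * qf M x := by
  simp [qf, smul_mulVec, dotProduct_smul]

lemma qf_zero (x : ι → ℝ) : qf (0 : Matrix ι ι ℝ) x = 0 := by simp [qf]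

lemma qf_sum {κ : Type*} (s : Finset κ) (f : κ → Matrix ι ι ℝ) (x : ι → ℝ) :
    qf (∑ j ∈ s, f j) x = ∑ j ∈ s, qf (f j) x := by
  classical
  induction s using Finset.induction_on with
  | empty => simp [qf_zero]
  | insert _ _ ha ih => rw [Finset.sum_insert ha, Finset.sum_insert ha, qf_add, ih]


lemma herm_smul {M : Matrix ι ι ℝ} (hM : M.IsHermitian) (c : ℝ) :
    (c • M).IsHermitian := by
  show (c • M)ᴴ = c • M
  rw [conjTranspose_smul, star_trivial, hM.eq]

lemma psd_smul {M : Matrix ι ι ℝ} (hM : M.PosSemidef) {c : ℝ} (hc : 0 ≤ c) :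
    (c • M).PosSemidef := by
  rw [psd_iff]
  refine ⟨herm_smul hM.1 c, fun x => ?_⟩
  rw [qf_smul]
  exact mul_nonneg hc ((psd_iff.1 hM).2 x)

lemma posdef_smul {M : Matrix ι ι ℝ} (hM : M.PosDef) {c : ℝ} (hc : 0 < c) :
    (c • M).PosDef := by
  refine Matrix.PosDef.of_dotProduct_mulVec_pos (herm_smul hM.1 c) fun x hx => ?_
  have := hM.dotProduct_mulVec_pos hx
  simp only [star_trivial] at this ⊢
  rw [smul_mulVec, dotProduct_smul, smul_eq_mul]
  exact mul_pos hc this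

lemma dp_symm {S : Matrix ι ι ℝ} (hS : S.IsHermitian) (u v : ι → ℝ) :
    u ⬝ᵥ S *ᵥ v = v ⬝ᵥ S *ᵥ u := by
  have hT : Sᵀ = S := by
    rw [← conjTranspose_eq_transpose_of_trivial]; exact hS
  rw [dotProduct_mulVec, ← mulVec_transpose, hT, dotProduct_comm]

lemma posdef_det_isUnit {M : Matrix ι ι ℝ} (hM : M.PosDef) : IsUnit M.det :=
  isUnit_iff_ne_zero.2 hM.det_pos.ne'

lemma qf_nonneg {M : Matrix ι ι ℝ} (hM : M.PosSemidef) (x : ι → ℝ) : 0 ≤ qf M x :=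
  (psd_iff.1 hM).2 x

lemma inv_anti {M N : Matrix ι ι ℝ} (hM : M.PosDef) (hN : N.PosDef)
    (h : (N - M).PosSemidef) : (M⁻¹ - N⁻¹).PosSemidef := by
  rw [psd_iff]
  refine ⟨hM.inv.1.sub hN.inv.1, fun x => ?_⟩
  set w := M⁻¹ *ᵥ x with hw
  set y := N⁻¹ *ᵥ x with hy
  have hMw : M *ᵥ w = x := by
    rw [hw, mulVec_mulVec, mul_nonsing_inv _ (posdef_det_isUnit hM), one_mulVec]
  have hNy : N *ᵥ y = x := by
    rw [hy, mulVec_mulVec, mul_nonsing_inv _ (posdef_det_isUnit hN), one_mulVec]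
  have e1 : qf M (w - y) = x ⬝ᵥ w - (y ⬝ᵥ x + y ⬝ᵥ x) + y ⬝ᵥ (M *ᵥ y) := by
    unfold qf
    rw [mulVec_sub, sub_dotProduct, dotProduct_sub, dotProduct_sub, hMw]
    rw [dp_symm hM.1 w y, hMw, dotProduct_comm w x]
    ring
  have e2 : qf (N - M) y = y ⬝ᵥ x - y ⬝ᵥ (M *ᵥ y) := by
    rw [qf_sub]
    unfold qf
    rw [hNy]
  have e3 : qf (M⁻¹ - N⁻¹) x = x ⬝ᵥ w - y ⬝ᵥ x := by
    rw [qf_sub]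
    unfold qf
    rw [← hw, ← hy, dotProduct_comm x y]
  have h1 : 0 ≤ qf M (w - y) := qf_nonneg hM.posSemidef _
  have h2 : 0 ≤ qf (N - M) y := qf_nonneg h _
  rw [e3]
  rw [e1] at h1
  rw [e2] at h2
  linarith

lemma psd_conj {M : Matrix ι ι ℝ} (hM : M.PosSemidef) (B : Matrix ι ι ℝ) :
    (B * M * Bᵀ).PosSemidef := by
  have := hM.mul_mul_conjTranspose_same B
  rwa [conjTranspose_eq_transpose_of_trivial] at this

lemma posdef_conj {M : Matrix ι ι ℝ} (hM : M.PosDef) {B : Matrix ι ι ℝ}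
    (hB : IsUnit B.det) : (B * M * Bᵀ).PosDef := by
  have hpsd := psd_conj hM.posSemidef B
  refine Matrix.PosDef.of_dotProduct_mulVec_pos hpsd.1 fun x hx => ?_
  have hxB : Bᵀ *ᵥ x ≠ 0 := by
    intro hc
    apply hx
    have hinj : Function.Injective (Bᵀ).mulVec :=
      mulVec_injective_iff_isUnit.2 ((isUnit_iff_isUnit_det _).2 (by rwa [det_transpose]))
    have : Bᵀ *ᵥ x = Bᵀ *ᵥ 0 := by rw [hc, mulVec_zero]
    exact hinj this
  have hkey : x ⬝ᵥ (B * M * Bᵀ) *ᵥ x = (Bᵀ *ᵥ x) ⬝ᵥ M *ᵥ (Bᵀ *ᵥ x) := by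
    rw [← mulVec_mulVec, ← mulVec_mulVec, dotProduct_mulVec x B, ← mulVec_transpose]
  simp only [star_trivial]
  rw [hkey]
  have := hM.dotProduct_mulVec_pos hxB
  simpa using this


lemma dotProduct_self_nonneg (x : ι → ℝ) : 0 ≤ x ⬝ᵥ x :=
  Finset.sum_nonneg fun i _ => mul_self_nonneg (x i)

lemma dotProduct_self_pos {x : ι → ℝ} (hx : x ≠ 0) : 0 < x ⬝ᵥ x := by
  rcases Function.ne_iff.1 hx with ⟨i, hi⟩
  refine Finset.sum_pos' (fun j _ => mul_self_nonneg (x j)) ⟨i, Finset.mem_univ i, ?_⟩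
  exact mul_self_pos.2 hi

lemma qf_smul_vec (M : Matrix ι ι ℝ) (c : ℝ) (x : ι → ℝ) :
    qf M (c • x) = c * c * qf M x := by
  simp [qf, mulVec_smul, smul_dotProduct, dotProduct_smul]
  ring

lemma continuous_qf (M : Matrix ι ι ℝ) : Continuous (qf M) := by
  have : qf M = fun x : ι → ℝ => ∑ i, x i * ∑ j, M i j * x j := by
    funext x
    simp [qf, dotProduct, mulVec]
  rw [this]
  refine continuous_finset_sum _ fun i _ => (continuous_apply i).mul ?_
  exact continuous_finset_sum _ fun j _ => continuous_const.mul (continuous_apply j)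

lemma exists_sphere_min [Nonempty ι] (M : Matrix ι ι ℝ) :
    ∃ u : ι → ℝ, u ⬝ᵥ u = 1 ∧ ∀ v : ι → ℝ, v ⬝ᵥ v = 1 → qf M u ≤ qf M v := by
  classical
  set S : Set (ι → ℝ) := {x | x ⬝ᵥ x = 1} with hS
  have hcont : Continuous fun x : ι → ℝ => x ⬝ᵥ x := by
    have h : (fun x : ι → ℝ => x ⬝ᵥ x) = fun x => ∑ i, x i * x i := by
      funext x; simp [dotProduct]
    rw [h]
    exact continuous_finset_sum _ fun i _ => (continuous_apply i).mul (continuous_apply i)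
  have hclosed : IsClosed S := isClosed_eq hcont continuous_const
  have hsub : S ⊆ Metric.closedBall 0 1 := by
    intro x hx
    rw [Metric.mem_closedBall, dist_zero_right]
    rw [pi_norm_le_iff_of_nonneg (by norm_num)]
    intro i
    rw [Real.norm_eq_abs, abs_le_one_iff_mul_self_le_one]
    calc x i * x i ≤ ∑ j, x j * x j :=
          Finset.single_le_sum (fun j _ => mul_self_nonneg (x j)) (Finset.mem_univ i)
      _ = 1 := hx
  have hcomp : IsCompact S :=
    (isCompact_closedBall (0 : ι → ℝ) 1).of_isClosed_subset hclosed hsub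
  have hSne : S.Nonempty := by
    refine ⟨Pi.single (Classical.arbitrary ι) 1, ?_⟩
    simp [hS, dotProduct, Pi.single_apply]
  obtain ⟨u, huS, humin⟩ := hcomp.exists_isMinOn hSne ((continuous_qf M).continuousOn)
  exact ⟨u, huS, fun v hv => humin hv⟩

lemma sphere_scale {M : Matrix ι ι ℝ} {c : ℝ}
    (h : ∀ u : ι → ℝ, u ⬝ᵥ u = 1 → c ≤ qf M u) (x : ι → ℝ) :
    c * (x ⬝ᵥ x) ≤ qf M x := by
  rcases eq_or_ne x 0 with rfl | hx
  · simp [qf]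
  · have hv : 0 < x ⬝ᵥ x := dotProduct_self_pos hx
    set t : ℝ := Real.sqrt (x ⬝ᵥ x) with ht
    have ht2 : t * t = x ⬝ᵥ x := Real.mul_self_sqrt (le_of_lt hv)
    have htpos : 0 < t := Real.sqrt_pos.2 hv
    have hu : (t⁻¹ • x) ⬝ᵥ (t⁻¹ • x) = 1 := by
      rw [smul_dotProduct, dotProduct_smul, smul_eq_mul, smul_eq_mul, ← mul_assoc]
      field_simp
      linarith [ht2]
    have := h _ hu
    rw [qf_smul_vec] at this
    have h2 : c * (t * t) ≤ qf M x := by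
      calc c * (t * t) ≤ (t⁻¹ * t⁻¹ * qf M x) * (t * t) := by
            apply mul_le_mul_of_nonneg_right this (by positivity)
        _ = qf M x := by field_simp
    rwa [ht2] at h2

lemma posdef_lower [Nonempty ι] {M : Matrix ι ι ℝ} (hM : M.PosDef) :
    ∃ ε : ℝ, 0 < ε ∧ (M - ε • (1 : Matrix ι ι ℝ)).PosSemidef := by
  obtain ⟨u, hu1, humin⟩ := exists_sphere_min M
  have hune : u ≠ 0 := by
    intro h
    rw [h] at hu1
    simp at hu1
  refine ⟨qf M u, by simpa [qf, star_trivial] using hM.dotProduct_mulVec_pos hune, ?_⟩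
  rw [psd_iff]
  constructor
  · exact hM.1.sub (herm_smul isHermitian_one _)
  · intro x
    rw [qf_sub, qf_smul, sub_nonneg]
    have : qf (1 : Matrix ι ι ℝ) x = x ⬝ᵥ x := by simp [qf]
    rw [this]
    exact sphere_scale (fun v hv => humin v hv) x

lemma herm_upper [Nonempty ι] {M : Matrix ι ι ℝ} (hM : M.IsHermitian) :
    ∃ K : ℝ, 0 < K ∧ (K • (1 : Matrix ι ι ℝ) - M).PosSemidef := by
  obtain ⟨u, hu1, humin⟩ := exists_sphere_min (-M)
  refine ⟨max (-(qf (-M) u)) 1, lt_of_lt_of_le one_pos (le_max_right _ _), ?_⟩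
  rw [psd_iff]
  constructor
  · exact (herm_smul isHermitian_one _).sub hM
  · intro x
    rw [qf_sub, qf_smul, sub_nonneg]
    have h1 : qf (-M) u * (x ⬝ᵥ x) ≤ qf (-M) x :=
      sphere_scale (fun v hv => humin v hv) x
    have h2 : qf (-M) x = - qf M x := by
      rw [show (-M : Matrix ι ι ℝ) = (0 : Matrix ι ι ℝ) - M from (zero_sub M).symm,
        qf_sub, qf_zero, zero_sub]
    have h3 : qf (1 : Matrix ι ι ℝ) x = x ⬝ᵥ x := by simp [qf]
    rw [h3]
    have h4 : qf M x ≤ (-(qf (-M) u)) * (x ⬝ᵥ x) := by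
      rw [h2] at h1; nlinarith [h1]
    calc qf M x ≤ (-(qf (-M) u)) * (x ⬝ᵥ x) := h4
      _ ≤ max (-(qf (-M) u)) 1 * (x ⬝ᵥ x) :=
          mul_le_mul_of_nonneg_right (le_max_left _ _) (dotProduct_self_nonneg x)

/-- For positive definite `X, Y` there is `c ∈ (0,1]` with `c • Y ≤ X`. -/
lemma posdef_pair [Nonempty ι] {X Y : Matrix ι ι ℝ} (hX : X.PosDef) (hY : Y.PosDef) :
    ∃ c : ℝ, 0 < c ∧ c ≤ 1 ∧ (X - c • Y).PosSemidef := by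
  obtain ⟨ε, hε, hXl⟩ := posdef_lower hX
  obtain ⟨K, hK, hYu⟩ := herm_upper hY.1
  refine ⟨min (ε / K) 1, lt_min (by positivity) one_pos, min_le_right _ _, ?_⟩
  set c := min (ε / K) 1 with hc
  have hcK : c * K ≤ ε := by
    have : c ≤ ε / K := min_le_left _ _
    calc c * K ≤ ε / K * K := mul_le_mul_of_nonneg_right this (le_of_lt hK)
      _ = ε := by field_simp
  have key : X - c • Y =
      (X - ε • (1 : Matrix ι ι ℝ)) + (ε - c * K) • (1 : Matrix ι ι ℝ)
        + c • ((K • (1 : Matrix ι ι ℝ)) - Y) := by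
    rw [smul_sub, smul_smul, sub_smul]
    abel
  rw [key]
  refine ((hXl.add (psd_smul Matrix.PosSemidef.one (by linarith))).add
    (psd_smul hYu (le_of_lt (lt_min (by positivity) one_pos))))

lemma bf_single (E : Matrix ι ι ℝ) (p q : ι) (a b : ℝ) :
    (Pi.single p a) ⬝ᵥ E *ᵥ (Pi.single q b) = a * E p q * b := by
  classical
  simp [dotProduct, mulVec, Pi.single_apply, Finset.mul_sum, mul_comm, mul_left_comm]

lemma psd_diag_nonneg {E : Matrix ι ι ℝ} (hE : E.PosSemidef) (p : ι) : 0 ≤ E p p := by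
  have := qf_nonneg hE (Pi.single p 1)
  rwa [show qf E (Pi.single p 1) = E p p by
    unfold qf; rw [bf_single]; ring] at this

lemma psd_entry_le {E : Matrix ι ι ℝ} (hE : E.PosSemidef) (p q : ι) :
    |E p q| ≤ (E p p + E q q) / 2 := by
  have hsym : E q p = E p q := by
    have := hE.1.apply p q
    simpa using this
  have expand : ∀ s : ℝ, qf E (Pi.single p 1 + Pi.single q s)
      = E p p + s * E p q + s * E q p + s * s * E q q := by
    intro s
    unfold qf
    rw [mulVec_add, dotProduct_add, add_dotProduct, add_dotProduct,
      bf_single, bf_single, bf_single, bf_single]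
    ring
  have hplus := qf_nonneg hE (Pi.single p 1 + Pi.single q 1)
  have hminus := qf_nonneg hE (Pi.single p 1 + Pi.single q (-1))
  rw [expand 1] at hplus
  rw [expand (-1)] at hminus
  rw [hsym] at hplus hminus
  rw [abs_le]
  constructor <;> [linarith; linarith]


lemma psd_sum {κ : Type*} (s : Finset κ) (f : κ → Matrix ι ι ℝ)
    (h : ∀ j ∈ s, (f j).PosSemidef) : (∑ j ∈ s, f j).PosSemidef := by
  classical
  induction s using Finset.induction_on with
  | empty => simpa using Matrix.PosSemidef.zero
  | insert _ _ ha ih =>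
    rw [Finset.sum_insert ha]
    exact (h _ (Finset.mem_insert_self _ _)).add
      (ih fun j hj => h j (Finset.mem_insert_of_mem hj))

lemma smul_inv_posdef {M : Matrix ι ι ℝ} (hM : M.PosDef) {c : ℝ} (hc : 0 < c) :
    (c • M)⁻¹ = c⁻¹ • M⁻¹ := by
  apply Matrix.inv_eq_right_inv
  rw [Matrix.smul_mul, Matrix.mul_smul, smul_smul, mul_nonsing_inv _ (posdef_det_isUnit hM)]
  rw [mul_inv_cancel₀ hc.ne', one_smul]

lemma Sm_psd {κ : Type*} [Fintype κ] [DecidableEq κ] (C : Matrix κ ι ℝ)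
    {R : Matrix κ κ ℝ} (hR : R.PosDef) : (Cᵀ * R⁻¹ * C).PosSemidef := by
  have := hR.inv.posSemidef.conjTranspose_mul_mul_same C
  rwa [conjTranspose_eq_transpose_of_trivial] at this


section Coupled

variable {n N : ℕ} {m : Fin N → ℕ}

/-- The coupled information map appearing inside the HCRE. -/
noncomputable def Gmap (L : Matrix (Fin N) (Fin N) ℝ)
    (C : ∀ i : Fin N, Matrix (Fin (m i)) (Fin n) ℝ)
    (R : ∀ i : Fin N, Matrix (Fin (m i)) (Fin (m i)) ℝ)
    (X : Fin N → Matrix (Fin n) (Fin n) ℝ) (i : Fin N) : Matrix (Fin n) (Fin n) ℝ :=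
  ∑ j, (L i j • (X j)⁻¹ + L i j • ((C j)ᵀ * (R j)⁻¹ * C j))

lemma Gmap_posdef {L : Matrix (Fin N) (Fin N) ℝ}
    {C : ∀ i : Fin N, Matrix (Fin (m i)) (Fin n) ℝ}
    {R : ∀ i : Fin N, Matrix (Fin (m i)) (Fin (m i)) ℝ}
    {X : Fin N → Matrix (Fin n) (Fin n) ℝ} {i : Fin N}
    (hLnn : ∀ j, 0 ≤ L i j) (hLrow : ∑ j, L i j = 1)
    (hR : ∀ j, (R j).PosDef) (hX : ∀ j, (X j).PosDef) :
    (Gmap L C R X i).PosDef := by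
  have hterm : ∀ j : Fin N,
      (L i j • (X j)⁻¹ + L i j • ((C j)ᵀ * (R j)⁻¹ * C j)).PosSemidef := fun j =>
    (psd_smul (hX j).inv.posSemidef (hLnn j)).add (psd_smul (Sm_psd (C j) (hR j)) (hLnn j))
  have hpsd : (Gmap L C R X i).PosSemidef := psd_sum _ _ fun j _ => hterm j
  obtain ⟨j0, hj0⟩ : ∃ j0, 0 < L i j0 := by
    by_contra h
    push_neg at h
    have : ∀ j : Fin N, L i j = 0 := fun j => le_antisymm (h j) (hLnn j)
    rw [Finset.sum_congr rfl fun j _ => this j] at hLrow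
    simp at hLrow
  refine Matrix.PosDef.of_dotProduct_mulVec_pos hpsd.1 fun x hx => ?_
  simp only [star_trivial]
  show 0 < qf (Gmap L C R X i) x
  rw [Gmap, qf_sum]
  have hj0pos : 0 < qf (L i j0 • (X j0)⁻¹ + L i j0 • ((C j0)ᵀ * (R j0)⁻¹ * C j0)) x := by
    rw [qf_add, qf_smul, qf_smul]
    have h1 : 0 < qf (X j0)⁻¹ x := by
      have := (hX j0).inv.dotProduct_mulVec_pos hx
      simpa [qf] using this
    have h2 : 0 ≤ qf ((C j0)ᵀ * (R j0)⁻¹ * C j0) x := qf_nonneg (Sm_psd (C j0) (hR j0)) x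
    nlinarith
  calc (0:ℝ) < qf (L i j0 • (X j0)⁻¹ + L i j0 • ((C j0)ᵀ * (R j0)⁻¹ * C j0)) x := hj0pos
    _ ≤ ∑ j, qf (L i j • (X j)⁻¹ + L i j • ((C j)ᵀ * (R j)⁻¹ * C j)) x :=
        Finset.single_le_sum (fun j _ => qf_nonneg (hterm j) x) (Finset.mem_univ j0)

variable {L : Matrix (Fin N) (Fin N) ℝ}
    {C : ∀ i : Fin N, Matrix (Fin (m i)) (Fin n) ℝ}
    {R : ∀ i : Fin N, Matrix (Fin (m i)) (Fin (m i)) ℝ}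

lemma step_low
    {A Q : Matrix (Fin n) (Fin n) ℝ} (hA : IsUnit A.det)
    {P X : Fin N → Matrix (Fin n) (Fin n) ℝ} {i : Fin N}
    (hLnn : ∀ j, 0 ≤ L i j) (hLrow : ∑ j, L i j = 1) (hR : ∀ j, (R j).PosDef)
    (hP : ∀ j, (P j).PosDef) (hX : ∀ j, (X j).PosDef)
    {α : ℝ} (hα0 : 0 < α) (hα1 : α ≤ 1)
    (hbd : ∀ j, (X j - α • P j).PosSemidef) :
    ((A * (Gmap L C R X i)⁻¹ * Aᵀ + Q)
      - (α • (A * (Gmap L C R P i)⁻¹ * Aᵀ + Q) + (1 - α) • Q)).PosSemidef := by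
  have hαinv : (1:ℝ) ≤ α⁻¹ := (one_le_inv_iff₀).2 ⟨hα0, hα1⟩
  have h1 : ∀ j, (α⁻¹ • (P j)⁻¹ - (X j)⁻¹).PosSemidef := by
    intro j
    have hPD : (α • P j).PosDef := posdef_smul (hP j) hα0
    have := inv_anti hPD (hX j) (hbd j)
    rwa [smul_inv_posdef (hP j) hα0] at this
  have h2 : (α⁻¹ • Gmap L C R P i - Gmap L C R X i).PosSemidef := by
    have e : α⁻¹ • Gmap L C R P i - Gmap L C R X i
        = ∑ j, (L i j • (α⁻¹ • (P j)⁻¹ - (X j)⁻¹)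
            + (L i j * (α⁻¹ - 1)) • ((C j)ᵀ * (R j)⁻¹ * C j)) := by
      rw [Gmap, Gmap, Finset.smul_sum, ← Finset.sum_sub_distrib]
      refine Finset.sum_congr rfl fun j _ => ?_
      module
    rw [e]
    refine psd_sum _ _ fun j _ => ?_
    exact (psd_smul (h1 j) (hLnn j)).add
      (psd_smul (Sm_psd (C j) (hR j)) (mul_nonneg (hLnn j) (by linarith)))
  have hGP : (Gmap L C R P i).PosDef := Gmap_posdef hLnn hLrow hR hP
  have hGX : (Gmap L C R X i).PosDef := Gmap_posdef hLnn hLrow hR hX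
  have hGP' : (α⁻¹ • Gmap L C R P i).PosDef := posdef_smul hGP (inv_pos.2 hα0)
  have h3 := inv_anti hGX hGP' h2
  rw [smul_inv_posdef hGP (inv_pos.2 hα0), inv_inv] at h3
  have h4 := psd_conj h3 A
  have e2 : A * ((Gmap L C R X i)⁻¹ - α • (Gmap L C R P i)⁻¹) * Aᵀ
      = A * (Gmap L C R X i)⁻¹ * Aᵀ - α • (A * (Gmap L C R P i)⁻¹ * Aᵀ) := by
    rw [mul_sub, Matrix.mul_smul, sub_mul, Matrix.smul_mul]
  rw [e2] at h4
  have e3 : (A * (Gmap L C R X i)⁻¹ * Aᵀ + Q)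
      - (α • (A * (Gmap L C R P i)⁻¹ * Aᵀ + Q) + (1 - α) • Q)
      = A * (Gmap L C R X i)⁻¹ * Aᵀ - α • (A * (Gmap L C R P i)⁻¹ * Aᵀ) := by
    module
  rw [e3]
  exact h4

lemma step_up
    {A Q : Matrix (Fin n) (Fin n) ℝ} (hA : IsUnit A.det)
    {P X : Fin N → Matrix (Fin n) (Fin n) ℝ} {i : Fin N}
    (hLnn : ∀ j, 0 ≤ L i j) (hLrow : ∑ j, L i j = 1) (hR : ∀ j, (R j).PosDef)
    (hP : ∀ j, (P j).PosDef) (hX : ∀ j, (X j).PosDef)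
    {β : ℝ} (hβ : 1 ≤ β)
    (hbd : ∀ j, (β • P j - X j).PosSemidef) :
    ((β • (A * (Gmap L C R P i)⁻¹ * Aᵀ + Q) - (β - 1) • Q)
      - (A * (Gmap L C R X i)⁻¹ * Aᵀ + Q)).PosSemidef := by
  have hβ0 : (0:ℝ) < β := lt_of_lt_of_le one_pos hβ
  have hβinv0 : (0:ℝ) < β⁻¹ := inv_pos.2 hβ0
  have hβinv1 : β⁻¹ ≤ 1 := by
    rw [inv_le_one_iff₀]
    right; exact hβ
  have h1 : ∀ j, ((X j)⁻¹ - β⁻¹ • (P j)⁻¹).PosSemidef := by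
    intro j
    have hPD : (β • P j).PosDef := posdef_smul (hP j) hβ0
    have := inv_anti (hX j) hPD (hbd j)
    rwa [smul_inv_posdef (hP j) hβ0] at this
  have h2 : (Gmap L C R X i - β⁻¹ • Gmap L C R P i).PosSemidef := by
    have e : Gmap L C R X i - β⁻¹ • Gmap L C R P i
        = ∑ j, (L i j • ((X j)⁻¹ - β⁻¹ • (P j)⁻¹)
            + (L i j * (1 - β⁻¹)) • ((C j)ᵀ * (R j)⁻¹ * C j)) := by
      rw [Gmap, Gmap, Finset.smul_sum, ← Finset.sum_sub_distrib]
      refine Finset.sum_congr rfl fun j _ => ?_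
      module
    rw [e]
    refine psd_sum _ _ fun j _ => ?_
    exact (psd_smul (h1 j) (hLnn j)).add
      (psd_smul (Sm_psd (C j) (hR j)) (mul_nonneg (hLnn j) (by linarith)))
  have hGP : (Gmap L C R P i).PosDef := Gmap_posdef hLnn hLrow hR hP
  have hGX : (Gmap L C R X i).PosDef := Gmap_posdef hLnn hLrow hR hX
  have hGP' : (β⁻¹ • Gmap L C R P i).PosDef := posdef_smul hGP hβinv0
  have h3 := inv_anti hGP' hGX h2
  rw [smul_inv_posdef hGP hβinv0, inv_inv] at h3
  have h4 := psd_conj h3 A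
  have e2 : A * (β • (Gmap L C R P i)⁻¹ - (Gmap L C R X i)⁻¹) * Aᵀ
      = β • (A * (Gmap L C R P i)⁻¹ * Aᵀ) - A * (Gmap L C R X i)⁻¹ * Aᵀ := by
    rw [mul_sub, Matrix.mul_smul, sub_mul, Matrix.smul_mul]
  rw [e2] at h4
  have e3 : (β • (A * (Gmap L C R P i)⁻¹ * Aᵀ + Q) - (β - 1) • Q)
      - (A * (Gmap L C R X i)⁻¹ * Aᵀ + Q)
      = β • (A * (Gmap L C R P i)⁻¹ * Aᵀ) - A * (Gmap L C R X i)⁻¹ * Aᵀ := by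
    module
  rw [e3]
  exact h4

end Coupled

end HCRE


open HCRE

/-- The iterates of the HCRE iterative law, started from arbitrary positive
definite initial matrices, converge entrywise to the unique positive definite solution. -/
theorem hcre_iterates_converge_to_solution
    (n N : ℕ) (hn : 0 < n) (hN : 0 < N)
    (m : Fin N → ℕ) (hm : ∀ i, 0 < m i)
    (A : Matrix (Fin n) (Fin n) ℝ) (hA : IsUnit A.det)
    (C : ∀ i : Fin N, Matrix (Fin (m i)) (Fin n) ℝ)
    (hObs : (∑ k ∈ Finset.range n, (A ^ k)ᵀ * (∑ i, (C i)ᵀ * C i) * A ^ k).PosDef)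
    (Q : Matrix (Fin n) (Fin n) ℝ) (hQ : Q.PosDef)
    (R : ∀ i : Fin N, Matrix (Fin (m i)) (Fin (m i)) ℝ) (hR : ∀ i, (R i).PosDef)
    (L : Matrix (Fin N) (Fin N) ℝ)
    (hLnonneg : ∀ i j, 0 ≤ L i j) (hLrow : ∀ i, ∑ j, L i j = 1)
    (hLprim : ∃ k : ℕ, 0 < k ∧ ∀ i j, 0 < (L ^ k) i j)
    (P : Fin N → Matrix (Fin n) (Fin n) ℝ) (hPpos : ∀ i, (P i).PosDef)
    (hsol : ∀ i, P i =
      A * (∑ j, (L i j • (P j)⁻¹ + L i j • ((C j)ᵀ * (R j)⁻¹ * C j)))⁻¹ * Aᵀ + Q)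
    (P0 : Fin N → Matrix (Fin n) (Fin n) ℝ) (hP0 : ∀ i, (P0 i).PosDef)
    (Pseq : ℕ → Fin N → Matrix (Fin n) (Fin n) ℝ)
    (hinit : Pseq 0 = P0)
    (hiter : ∀ k i, Pseq (k + 1) i =
      A * (∑ j, (L i j • (Pseq k j)⁻¹ + L i j • ((C j)ᵀ * (R j)⁻¹ * C j)))⁻¹ * Aᵀ + Q) :
    ∀ i : Fin N, Tendsto (fun k => Pseq k i) atTop (nhds (P i)) := by
  haveI : Nonempty (Fin n) := ⟨⟨0, hn⟩⟩
  have hiter' : ∀ k i, Pseq (k + 1) i = A * (Gmap L C R (Pseq k) i)⁻¹ * Aᵀ + Q := by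
    intro k i
    rw [hiter k i]
    simp only [Gmap]
  have hsol' : ∀ i, P i = A * (Gmap L C R P i)⁻¹ * Aᵀ + Q := by
    intro i
    simp only [Gmap]
    exact hsol i
  -- the contraction constant c
  choose cf hcf0 hcf1 hcfP using fun i => posdef_pair hQ (hPpos i)
  obtain ⟨jc, -, hjc⟩ := Finset.exists_min_image Finset.univ cf ⟨⟨0, hN⟩, Finset.mem_univ _⟩
  set c : ℝ := cf jc with hcdef
  have hc0 : 0 < c := hcf0 jc
  have hc1 : c ≤ 1 := hcf1 jc
  have hcQ : ∀ i, (Q - c • P i).PosSemidef := by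
    intro i
    have e : Q - c • P i = (Q - cf i • P i) + (cf i - c) • P i := by module
    rw [e]
    exact (hcfP i).add (psd_smul (hPpos i).posSemidef
      (sub_nonneg.2 (hjc i (Finset.mem_univ i))))
  -- initial lower constant
  choose af haf0 haf1 hafP using fun i => posdef_pair (hP0 i) (hPpos i)
  obtain ⟨ja, -, hja⟩ := Finset.exists_min_image Finset.univ af ⟨⟨0, hN⟩, Finset.mem_univ _⟩
  set α₀ : ℝ := af ja with hα₀def
  have hα₀0 : 0 < α₀ := haf0 ja
  have hα₀1 : α₀ ≤ 1 := haf1 ja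
  have hlow0 : ∀ i, (P0 i - α₀ • P i).PosSemidef := by
    intro i
    have e : P0 i - α₀ • P i = (P0 i - af i • P i) + (af i - α₀) • P i := by module
    rw [e]
    exact (hafP i).add (psd_smul (hPpos i).posSemidef
      (sub_nonneg.2 (hja i (Finset.mem_univ i))))
  -- initial upper constant
  choose ef hef0 hef1 hefP using fun i => posdef_pair (hPpos i) (hP0 i)
  have hup' : ∀ i, ((ef i)⁻¹ • P i - P0 i).PosSemidef := by
    intro i
    have h := psd_smul (hefP i) (le_of_lt (inv_pos.2 (hef0 i)))
    have e : (ef i)⁻¹ • (P i - ef i • P0 i) = (ef i)⁻¹ • P i - P0 i := by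
      rw [smul_sub, smul_smul, inv_mul_cancel₀ (hef0 i).ne', one_smul]
    rwa [e] at h
  obtain ⟨jb, -, hjb⟩ := Finset.exists_max_image Finset.univ (fun i => (ef i)⁻¹)
    ⟨⟨0, hN⟩, Finset.mem_univ _⟩
  set β₀ : ℝ := (ef jb)⁻¹ with hβ₀def
  have hβ₀1 : 1 ≤ β₀ := (one_le_inv_iff₀).2 ⟨hef0 jb, hef1 jb⟩
  have hup0 : ∀ i, (β₀ • P i - P0 i).PosSemidef := by
    intro i
    have e : β₀ • P i - P0 i = ((ef i)⁻¹ • P i - P0 i) + (β₀ - (ef i)⁻¹) • P i := by module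
    rw [e]
    exact (hup' i).add (psd_smul (hPpos i).posSemidef
      (sub_nonneg.2 (hjb i (Finset.mem_univ i))))
  -- geometric constants
  set a : ℝ := 1 - α₀ with hadef
  set b : ℝ := β₀ - 1 with hbdef
  set r : ℝ := 1 - c with hrdef
  clear_value c α₀ β₀ a b r
  have ha0 : 0 ≤ a := by rw [hadef]; linarith
  have ha1 : a < 1 := by rw [hadef]; linarith
  have hb0 : 0 ≤ b := by rw [hbdef]; linarith
  have hr0 : 0 ≤ r := by rw [hrdef]; linarith
  have hr1 : r < 1 := by rw [hrdef]; linarith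
  -- the main sandwich, by induction
  have key : ∀ k, (∀ i, (Pseq k i).PosDef) ∧
      (∀ i, (Pseq k i - (1 - a * r ^ k) • P i).PosSemidef) ∧
      (∀ i, ((1 + b * r ^ k) • P i - Pseq k i).PosSemidef) := by
    intro k
    induction k with
    | zero =>
      refine ⟨fun i => by rw [hinit]; exact hP0 i, fun i => ?_, fun i => ?_⟩
      · simp only [pow_zero, mul_one, hinit]
        rw [show (1 : ℝ) - a = α₀ by rw [hadef]; ring]
        exact hlow0 i
      · simp only [pow_zero, mul_one, hinit]
        rw [show (1 : ℝ) + b = β₀ by rw [hbdef]; ring]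
        exact hup0 i
    | succ k ih =>
      obtain ⟨hkpos, hklow, hkup⟩ := ih
      have hrk0 : 0 ≤ r ^ k := pow_nonneg hr0 k
      have hrk1 : r ^ k ≤ 1 := pow_le_one₀ hr0 (le_of_lt hr1)
      have hαk0 : 0 < 1 - a * r ^ k := by nlinarith
      have hαk1 : 1 - a * r ^ k ≤ 1 := by nlinarith
      have hβk : 1 ≤ 1 + b * r ^ k := by nlinarith
      refine ⟨fun i => ?_, fun i => ?_, fun i => ?_⟩
      · rw [hiter' k i]
        exact (posdef_conj (Gmap_posdef (hLnonneg i) (hLrow i) hR hkpos).inv hA).add hQ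
      · have hstep := step_low (C := C) (R := R) (Q := Q) hA (hLnonneg i) (hLrow i) hR hPpos
          hkpos hαk0 hαk1 hklow (i := i)
        rw [← hsol' i] at hstep
        rw [hiter' k i]
        have e : A * (Gmap L C R (Pseq k) i)⁻¹ * Aᵀ + Q - (1 - a * r ^ (k + 1)) • P i
            = ((A * (Gmap L C R (Pseq k) i)⁻¹ * Aᵀ + Q)
                - ((1 - a * r ^ k) • P i + (1 - (1 - a * r ^ k)) • Q))
              + (1 - (1 - a * r ^ k)) • (Q - c • P i) := by
          rw [pow_succ, hrdef]
          module
        rw [e]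
        exact hstep.add (psd_smul (hcQ i) (by nlinarith))
      · have hstep := step_up (C := C) (R := R) (Q := Q) hA (hLnonneg i) (hLrow i) hR hPpos
          hkpos hβk hkup (i := i)
        rw [← hsol' i] at hstep
        rw [hiter' k i]
        have e : (1 + b * r ^ (k + 1)) • P i - (A * (Gmap L C R (Pseq k) i)⁻¹ * Aᵀ + Q)
            = (((1 + b * r ^ k) • P i - ((1 + b * r ^ k) - 1) • Q)
                - (A * (Gmap L C R (Pseq k) i)⁻¹ * Aᵀ + Q))
              + ((1 + b * r ^ k) - 1) • (Q - c • P i) := by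
          rw [pow_succ, hrdef]
          module
        rw [e]
        exact hstep.add (psd_smul (hcQ i) (by nlinarith))
  -- entrywise convergence
  intro i
  refine tendsto_pi_nhds.2 ?_
  intro p
  rw [tendsto_pi_nhds]
  intro q
  set Cst : ℝ := (a + b) * ((P i p p + P i q q) / 2) + a * |P i p q| with hCst
  clear_value Cst
  have hbound : ∀ k, |Pseq k i p q - P i p q| ≤ Cst * r ^ k := by
    intro k
    obtain ⟨-, hklow, hkup⟩ := key k
    have hEpsd := hklow i
    have hDpsd : (((a + b) * r ^ k) • P i - (Pseq k i - (1 - a * r ^ k) • P i)).PosSemidef := by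
      have e : ((a + b) * r ^ k) • P i - (Pseq k i - (1 - a * r ^ k) • P i)
          = (1 + b * r ^ k) • P i - Pseq k i := by module
      rw [e]
      exact hkup i
    have h1 := psd_entry_le hEpsd p q
    have h2 := psd_diag_nonneg hDpsd p
    have h3 := psd_diag_nonneg hDpsd q
    simp only [Matrix.sub_apply, Matrix.smul_apply, smul_eq_mul] at h1 h2 h3
    have hentry : Pseq k i p q - P i p q
        = (Pseq k i p q - (1 - a * r ^ k) * P i p q) - (a * r ^ k) * P i p q := by ring
    rw [hentry]
    have habs : |(Pseq k i p q - (1 - a * r ^ k) * P i p q) - (a * r ^ k) * P i p q|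
        ≤ |Pseq k i p q - (1 - a * r ^ k) * P i p q| + |(a * r ^ k) * P i p q| := by
      have h := abs_add_le (Pseq k i p q - (1 - a * r ^ k) * P i p q) (-((a * r ^ k) * P i p q))
      rw [abs_neg] at h
      rw [sub_eq_add_neg]
      exact h
    have habs2 : |(a * r ^ k) * P i p q| = (a * r ^ k) * |P i p q| := by
      rw [abs_mul, abs_of_nonneg (by positivity)]
    calc |(Pseq k i p q - (1 - a * r ^ k) * P i p q) - (a * r ^ k) * P i p q|
        ≤ |Pseq k i p q - (1 - a * r ^ k) * P i p q| + |(a * r ^ k) * P i p q| := habs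
      _ ≤ ((a + b) * r ^ k) * ((P i p p + P i q q) / 2) + (a * r ^ k) * |P i p q| := by
          rw [habs2]
          have : |Pseq k i p q - (1 - a * r ^ k) * P i p q|
              ≤ ((a + b) * r ^ k) * ((P i p p + P i q q) / 2) := by nlinarith [h1, h2, h3]
          linarith
      _ = Cst * r ^ k := by rw [hCst]; ring
  have hgeo : Tendsto (fun k : ℕ => Cst * r ^ k) atTop (nhds 0) := by
    simpa using (tendsto_pow_atTop_nhds_zero_of_lt_one hr0 hr1).const_mul Cst
  have h3 : Tendsto (fun k => Pseq k i p q - P i p q) atTop (nhds 0) :=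
    squeeze_zero_norm (fun k => by simpa [Real.norm_eq_abs] using hbound k) hgeo
  simpa using h3.add_const (P i p q)
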